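/- Let L ⊆ V ⊕ V* be a maximal isotropic subspace and W ⊆ V a subspace with annihilator W⁰ ⊆ V*. If (W ⊕ W⁰) ∩ L = {0}, then the subspace H := {X ∈ V : ∃ α ∈ W⁰, (X,α) ∈ L} is a complement of W in V, i.e. V = H ⊕ W. -/

import Mathlib

open Module

noncomputable def pairPlus {V : Type*} [AddCommGroup V] [Module ℝ V]
    (p q : V × Module.Dual ℝ V) : ℝ :=
  (1 / 2) * (p.2 q.1 + q.2 p.1)

def IsIsotropicP {V : Type*} [AddCommGroup V] [Module ℝ V]
    (L : Submodule ℝ (V × Module.Dual ℝ V)) : Prop :=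
  ∀ p ∈ L, ∀ q ∈ L, pairPlus p q = 0

def IsMaxIsotropicP {V : Type*} [AddCommGroup V] [Module ℝ V]
    (L : Submodule ℝ (V × Module.Dual ℝ V)) : Prop :=
  IsIsotropicP L ∧ ∀ L' : Submodule ℝ (V × Module.Dual ℝ V),
    IsIsotropicP L' → L ≤ L' → L = L'

/-- The horizontal space `H = {X ∈ V : ∃ α ∈ W⁰, (X,α) ∈ L}` associated with a
subspace `L ⊆ V ⊕ V*` and a subspace `W ⊆ V`. -/
def horizSub {V : Type*} [AddCommGroup V] [Module ℝ V]
    (L : Submodule ℝ (V × Module.Dual ℝ V)) (W : Submodule ℝ V) :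
    Submodule ℝ V where
  carrier := {X | ∃ α ∈ W.dualAnnihilator, (X, α) ∈ L}
  add_mem' := by
    rintro a b ⟨α, hα, hαL⟩ ⟨β, hβ, hβL⟩
    exact ⟨α + β, Submodule.add_mem _ hα hβ, L.add_mem hαL hβL⟩
  zero_mem' := ⟨0, Submodule.zero_mem _, L.zero_mem⟩
  smul_mem' := by
    rintro c a ⟨α, hα, hαL⟩
    exact ⟨c • α, Submodule.smul_mem _ _ hα, L.smul_mem c hαL⟩

section S
variable {V : Type*} [AddCommGroup V] [Module ℝ V]

noncomputable def BP (V : Type*) [AddCommGroup V] [Module ℝ V] :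
    LinearMap.BilinForm ℝ (V × Module.Dual ℝ V) :=
  LinearMap.mk₂ ℝ (fun p q => (1 / 2) * (p.2 q.1 + q.2 p.1))
    (by intro p p' q; simp; ring)
    (by intro c p q; simp; ring)
    (by intro p q q'; simp; ring)
    (by intro c p q; simp; ring)

lemma BP_apply (p q : V × Module.Dual ℝ V) :
    BP V p q = (1 / 2) * (p.2 q.1 + q.2 p.1) := rfl

lemma BP_symm (p q : V × Module.Dual ℝ V) : BP V p q = BP V q p := by
  simp [BP_apply]; ring

lemma BP_refl : (BP V).IsRefl := fun p q h => by rw [← BP_symm]; exact h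

lemma BP_self (p : V × Module.Dual ℝ V) : BP V p p = p.2 p.1 := by
  simp [BP_apply]; ring

lemma BP_nondegenerate [FiniteDimensional ℝ V] : (BP V).Nondegenerate := by
  refine (LinearMap.IsRefl.nondegenerate_iff_separatingLeft (B := BP V) (fun p q h => BP_refl p q h)).2 ?_
  intro p hp
  have h1 : p.2 = 0 := by
    ext Y
    have := hp (Y, 0); simp [BP_apply] at this; simpa using this
  have h2 : p.1 = 0 := by
    rw [← Module.forall_dual_apply_eq_zero_iff ℝ p.1]
    intro φ
    have := hp (0, φ); simp [BP_apply] at this; simpa using this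
  exact Prod.ext h2 h1

variable [FiniteDimensional ℝ V]

lemma toDual_pos (b : Basis (Fin (finrank ℝ V)) ℝ V) {X : V} (hX : X ≠ 0) :
    0 < b.toDual X X := by
  have hrepr : b.toDual X X = ∑ i, (b.repr X i) * (b.repr X i) := by
    have h0 : b.toDual X X = b.toDual X (∑ i, b.repr X i • b i) := by rw [b.sum_repr]
    rw [h0, map_sum]
    simp only [map_smul, smul_eq_mul, Basis.toDual_eq_repr]
  rw [hrepr]
  have hne : b.repr X ≠ 0 := fun h => hX (by
    have h' := congrArg b.repr.symm h; simpa using h')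
  obtain ⟨i, hi⟩ : ∃ i, b.repr X i ≠ 0 := by
    by_contra h; push_neg at h; exact hne (Finsupp.ext h)
  apply Finset.sum_pos' (fun j _ => mul_self_nonneg _)
  exact ⟨i, Finset.mem_univ i, mul_self_pos.2 hi⟩

lemma finrank_graph (f : V →ₗ[ℝ] Module.Dual ℝ V) :
    finrank ℝ (LinearMap.graph f) = finrank ℝ V := by
  rw [LinearMap.graph_eq_range_prod]
  have h := LinearMap.finrank_range_add_finrank_ker (LinearMap.id.prod f)
  have hker : LinearMap.ker (LinearMap.id.prod f) = ⊥ := by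
    apply LinearMap.ker_eq_bot_of_injective
    intro x y hxy
    simpa using congrArg Prod.fst hxy
  rw [hker, finrank_bot, add_zero] at h
  exact h

def IsIsotropicP' (L : Submodule ℝ (V × Module.Dual ℝ V)) : Prop :=
  ∀ p ∈ L, ∀ q ∈ L, BP V p q = 0

lemma finrank_E : finrank ℝ (V × Module.Dual ℝ V) = 2 * finrank ℝ V := by
  rw [finrank_prod, Subspace.dual_finrank_eq]; ring

set_option maxHeartbeats 1000000 in
theorem finrank_maxIsotropic (L : Submodule ℝ (V × Module.Dual ℝ V))
    (hiso : IsIsotropicP' L)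
    (hmax : ∀ L' : Submodule ℝ (V × Module.Dual ℝ V),
      IsIsotropicP' L' → L ≤ L' → L = L') :
    finrank ℝ L = finrank ℝ V := by
  set n := finrank ℝ V with hn
  set k := finrank ℝ L with hk
  have b := Module.finBasis ℝ V
  set g := b.toDual with hg
  -- upper bound
  have hdisj : L ⊓ LinearMap.graph g = ⊥ := by
    rw [Submodule.eq_bot_iff]
    intro z hz
    obtain ⟨hzL, hzG⟩ := Submodule.mem_inf.1 hz
    rw [LinearMap.mem_graph_iff] at hzG
    have hQ : BP V z z = 0 := hiso z hzL z hzL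
    rw [BP_self, hzG] at hQ
    have hz1 : z.1 = 0 := by
      by_contra h; exact (toDual_pos b h).ne' hQ
    have : z.2 = 0 := by rw [hzG, hz1, map_zero]
    exact Prod.ext hz1 this
  have hupper : k ≤ n := by
    have h1 := Submodule.finrank_sup_add_finrank_inf_eq L (LinearMap.graph g)
    rw [hdisj, finrank_bot, add_zero, finrank_graph] at h1
    have h2 : finrank ℝ ↥(L ⊔ LinearMap.graph g) ≤ 2 * n := by
      rw [← finrank_E]; exact Submodule.finrank_le _
    omega
  -- lower bound
  by_contra hne
  have hklt : k < n := lt_of_le_of_ne hupper (fun h => hne (by omega))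
  set P := (BP V).orthogonal L with hP
  have hPrank : finrank ℝ P = 2 * n - k := by
    rw [hP, LinearMap.BilinForm.finrank_orthogonal BP_nondegenerate, finrank_E]
  -- nonzero elements in P ⊓ graphs
  have key : ∀ f : V →ₗ[ℝ] Module.Dual ℝ V,
      ∃ z : V × Module.Dual ℝ V, z ∈ P ∧ z.2 = f z.1 ∧ z ≠ 0 := by
    intro f
    have h1 := Submodule.finrank_sup_add_finrank_inf_eq P (LinearMap.graph f)
    have h2 : finrank ℝ ↥(P ⊔ LinearMap.graph f) ≤ 2 * n := by
      rw [← finrank_E]; exact Submodule.finrank_le _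
    rw [finrank_graph, hPrank] at h1
    have hpos : 0 < finrank ℝ ↥(P ⊓ LinearMap.graph f) := by omega
    obtain ⟨z, hz, hz0⟩ := Submodule.exists_mem_ne_zero_of_ne_bot
      (p := P ⊓ LinearMap.graph f)
      (by intro h; rw [h, finrank_bot] at hpos; omega)
    obtain ⟨hz1, hz2⟩ := Submodule.mem_inf.1 hz
    rw [LinearMap.mem_graph_iff] at hz2
    exact ⟨z, hz1, hz2, hz0⟩
  obtain ⟨z, hzP, hzG, hz0⟩ := key (-g)
  obtain ⟨z', hz'P, hz'G, hz'0⟩ := key g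
  have hz1 : z.1 ≠ 0 := by
    intro h; apply hz0
    have : z.2 = 0 := by rw [hzG, h]; simp
    exact Prod.ext h this
  have hz'1 : z'.1 ≠ 0 := by
    intro h; apply hz'0
    have : z'.2 = 0 := by rw [hz'G, h, map_zero]
    exact Prod.ext h this
  set a := BP V z z with ha
  set c := BP V z' z' with hc
  set m := BP V z z' with hm
  have haneg : a < 0 := by
    rw [ha, BP_self, hzG]
    simp only [LinearMap.neg_apply]
    exact neg_lt_zero.2 (toDual_pos b hz1)
  have hcpos : 0 < c := by
    rw [hc, BP_self, hz'G]; exact toDual_pos b hz'1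
  clear_value a c m
  -- the root
  have hdisc : (0:ℝ) ≤ m ^ 2 - a * c := by nlinarith
  set s := Real.sqrt (m ^ 2 - a * c) with hs
  have hs2 : s ^ 2 = m ^ 2 - a * c := Real.sq_sqrt hdisc
  clear_value s
  set t := (-m + s) / a with ht
  clear_value t
  have ha0 : a ≠ 0 := ne_of_lt haneg
  have hquad : a * t ^ 2 + 2 * m * t + c = 0 := by
    rw [ht]
    field_simp
    nlinarith [hs2]
  set w := z' + t • z with hw
  have hwP : w ∈ P := P.add_mem hz'P (P.smul_mem t hzP)
  have hexp : ∀ u : V × Module.Dual ℝ V, BP V w u = BP V z' u + t * BP V z u := by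
    intro u
    rw [hw]
    simp [map_add, map_smul, LinearMap.add_apply, LinearMap.smul_apply, smul_eq_mul]
  have hQw : BP V w w = 0 := by
    rw [hexp w, hw]
    have e1 : BP V z' (z' + t • z) = c + t * m := by
      simp only [map_add, map_smul, smul_eq_mul]
      rw [← hc, ← BP_symm z z', ← hm]
    have e2 : BP V z (z' + t • z) = m + t * a := by
      simp only [map_add, map_smul, smul_eq_mul]
      rw [← hm, ← ha]
    rw [e1, e2]; linear_combination hquad
  have hwL : w ∉ L := by
    intro hwl
    have h1 : BP V w z = 0 :=
      LinearMap.BilinForm.mem_orthogonal_iff.1 hzP w hwl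
    have h2 : BP V w z' = 0 :=
      LinearMap.BilinForm.mem_orthogonal_iff.1 hz'P w hwl
    rw [hexp z] at h1
    rw [hexp z'] at h2
    rw [← BP_symm z z', ← hm, ← ha] at h1
    rw [← hc, ← hm] at h2
    have hca : c = t ^ 2 * a := by linear_combination h2 - t * h1
    nlinarith [sq_nonneg t]
  -- extend L
  set L' := L ⊔ Submodule.span ℝ {w} with hL'
  have hL'iso : IsIsotropicP' L' := by
    intro p hp q hq
    rw [hL', Submodule.mem_sup] at hp hq
    obtain ⟨u, hu, x, hx, rfl⟩ := hp
    obtain ⟨u', hu', x', hx', rfl⟩ := hq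
    rw [Submodule.mem_span_singleton] at hx hx'
    obtain ⟨r, rfl⟩ := hx
    obtain ⟨r', rfl⟩ := hx'
    have e : BP V (u + r • w) (u' + r' • w)
        = BP V u u' + r' * BP V u w + r * BP V w u' + r * (r' * BP V w w) := by
      simp [map_add, map_smul, LinearMap.add_apply, LinearMap.smul_apply, smul_eq_mul]
      ring
    have o1 : BP V u w = 0 := LinearMap.BilinForm.mem_orthogonal_iff.1 hwP u hu
    have o2 : BP V w u' = 0 :=
      BP_refl u' w (LinearMap.BilinForm.mem_orthogonal_iff.1 hwP u' hu')
    rw [e, hiso u hu u' hu', hQw, o1, o2]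
    ring
  have := hmax L' hL'iso le_sup_left
  apply hwL
  rw [this]
  exact Submodule.mem_sup_right (Submodule.mem_span_singleton_self w)

end S

section MainAux
variable {V : Type*} [AddCommGroup V] [Module ℝ V] [FiniteDimensional ℝ V]

lemma finrank_prod_sub {M N : Type*} [AddCommGroup M] [Module ℝ M] [AddCommGroup N]
    [Module ℝ N] [FiniteDimensional ℝ M] [FiniteDimensional ℝ N]
    (p : Submodule ℝ M) (q : Submodule ℝ N) :
    finrank ℝ (p.prod q) = finrank ℝ p + finrank ℝ q := by
  have e : (p.prod q) ≃ₗ[ℝ] p × q :=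
    { toFun := fun x => (⟨x.1.1, x.2.1⟩, ⟨x.1.2, x.2.2⟩)
      map_add' := fun x y => rfl
      map_smul' := fun c x => rfl
      invFun := fun y => ⟨(y.1.1, y.2.1), ⟨y.1.2, y.2.2⟩⟩
      left_inv := fun x => rfl
      right_inv := fun y => rfl }
  rw [e.finrank_eq, finrank_prod]

end MainAux

/-- If `L ⊆ V ⊕ V*` is maximal isotropic and `(W ⊕ W⁰) ∩ L = 0`, then
`H = {X : ∃ α ∈ W⁰, (X,α) ∈ L}` is a complement of `W` in `V`. -/
theorem horizSub_isCompl
    {V : Type*} [AddCommGroup V] [Module ℝ V] [FiniteDimensional ℝ V]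
    (L : Submodule ℝ (V × Module.Dual ℝ V)) (W : Submodule ℝ V)
    (hL : IsMaxIsotropicP L)
    (hnd : W.prod W.dualAnnihilator ⊓ L = ⊥) :
    IsCompl (horizSub L W) W := by
  classical
  set n := finrank ℝ V with hn
  -- L is isotropic for BP and maximal
  have hiso' : IsIsotropicP' L := fun p hp q hq => hL.1 p hp q hq
  have hmax' : ∀ L' : Submodule ℝ (V × Module.Dual ℝ V),
      IsIsotropicP' L' → L ≤ L' → L = L' :=
    fun L' h hle => hL.2 L' (fun p hp q hq => h p hp q hq) hle
  have hrankL : finrank ℝ L = n := finrank_maxIsotropic L hiso' hmax'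
  -- dimension of the annihilator
  have hW0 : finrank ℝ W.dualAnnihilator + finrank ℝ W = n := by
    rw [← (Subspace.quotEquivAnnihilator W).finrank_eq]
    exact Submodule.finrank_quotient_add_finrank W
  -- disjointness
  have hdisj : horizSub L W ⊓ W = ⊥ := by
    rw [Submodule.eq_bot_iff]
    intro x hx
    obtain ⟨hxH, hxW⟩ := Submodule.mem_inf.1 hx
    obtain ⟨α, hα, hαL⟩ := hxH
    have hmem : (x, α) ∈ W.prod W.dualAnnihilator ⊓ L :=
      Submodule.mem_inf.2 ⟨Submodule.mem_prod.2 ⟨hxW, hα⟩, hαL⟩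
    rw [hnd] at hmem
    exact congrArg Prod.fst ((Submodule.mem_bot ℝ).1 hmem)
  -- finrank of H
  set T := (⊤ : Submodule ℝ V).prod W.dualAnnihilator with hT
  set M := L ⊓ T with hM
  have hTrank : finrank ℝ T = n + finrank ℝ W.dualAnnihilator := by
    rw [hT, finrank_prod_sub, finrank_top]
  have hMrank : finrank ℝ M + n ≥ n + finrank ℝ W.dualAnnihilator := by
    have h1 := Submodule.finrank_sup_add_finrank_inf_eq L T
    have h2 : finrank ℝ ↥(L ⊔ T) ≤ 2 * n := by
      rw [← finrank_E]; exact Submodule.finrank_le _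
    rw [hrankL, hTrank, ← hM] at h1
    omega
  have hHrank : finrank ℝ (horizSub L W) = finrank ℝ M := by
    set f := (LinearMap.fst ℝ V (Module.Dual ℝ V)).comp M.subtype with hf
    have hinj : Function.Injective f := by
      rw [injective_iff_map_eq_zero]
      intro x hx
      have hx1 : (x : V × Module.Dual ℝ V).1 = 0 := hx
      obtain ⟨hxL, hxT⟩ := Submodule.mem_inf.1 x.2
      have hx2 : (x : V × Module.Dual ℝ V).2 ∈ W.dualAnnihilator :=
        (Submodule.mem_prod.1 hxT).2
      have hmem : (x : V × Module.Dual ℝ V) ∈ W.prod W.dualAnnihilator ⊓ L :=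
        Submodule.mem_inf.2 ⟨Submodule.mem_prod.2 ⟨hx1 ▸ W.zero_mem, hx2⟩, hxL⟩
      rw [hnd] at hmem
      exact Subtype.ext ((Submodule.mem_bot ℝ).1 hmem)
    have hrange : LinearMap.range f = horizSub L W := by
      ext x
      constructor
      · rintro ⟨⟨y, hy⟩, rfl⟩
        obtain ⟨hyL, hyT⟩ := Submodule.mem_inf.1 hy
        exact ⟨y.2, (Submodule.mem_prod.1 hyT).2, hyL⟩
      · rintro ⟨α, hα, hαL⟩
        have hmemT : (x, α) ∈ T := Submodule.mem_prod.2 ⟨trivial, hα⟩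
        have hmemM : (x, α) ∈ M := Submodule.mem_inf.2 ⟨hαL, hmemT⟩
        exact ⟨⟨(x, α), hmemM⟩, rfl⟩
    have e := LinearEquiv.ofInjective f hinj
    rw [← hrange]
    exact e.finrank_eq.symm
  -- conclude
  have hsup : horizSub L W ⊔ W = ⊤ := by
    apply Submodule.eq_top_of_finrank_eq
    have h1 := Submodule.finrank_sup_add_finrank_inf_eq (horizSub L W) W
    rw [hdisj, finrank_bot, add_zero, hHrank] at h1
    have h2 : finrank ℝ ↥(horizSub L W ⊔ W) ≤ n := Submodule.finrank_le _
    omega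
  exact ⟨disjoint_iff.2 hdisj, codisjoint_iff.2 hsup⟩
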